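/- Let F be a finite field of characteristic p, let C be a linear code of length n over F with a permutation automorphism σ, and suppose every cycle of σ has length congruent to l modulo p, where l ≢ 0 (mod p). If C is self-orthogonal with respect to the Euclidean inner product, then the projection code C_π = π(F_σ(C)) is also self-orthogonal. -/
import Mathlib


open Finset

/-- The action of a permutation `σ` on vectors by permuting coordinates: `(vσ) i = v (σ i)`. -/
def permAct {F : Type*} {n : ℕ} (σ : Equiv.Perm (Fin n)) (v : Fin n → F) : Fin n → F :=
  fun i => v (σ i)

open Classical in
/-- The cycle (orbit) of `σ` containing the coordinate `i`, as a `Finset`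
(fixed points are counted as cycles of length 1). -/
noncomputable def orbitOf {n : ℕ} (σ : Equiv.Perm (Fin n)) (i : Fin n) : Finset (Fin n) :=
  Finset.univ.filter (fun j => σ.SameCycle i j)

/-- The Euclidean inner product `u·v = ∑ i, u i * v i`. -/
def eInner {F : Type*} [Field F] {ι : Type*} [Fintype ι] (u v : ι → F) : F :=
  ∑ i, u i * v i

/-- The Euclidean dual of a set of vectors. -/
def dualSet {F : Type*} [Field F] {ι : Type*} [Fintype ι] (S : Set (ι → F)) : Set (ι → F) :=
  {u | ∀ v ∈ S, eInner u v = 0}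

/-- A set of vectors is self-orthogonal if it is contained in its dual. -/
def IsSelfOrthogonalSet {F : Type*} [Field F] {ι : Type*} [Fintype ι] (S : Set (ι → F)) : Prop :=
  S ⊆ dualSet S

/-- A set of vectors is self-dual if it equals its dual. -/
def IsSelfDualSet {F : Type*} [Field F] {ι : Type*} [Fintype ι] (S : Set (ι → F)) : Prop :=
  S = dualSet S

/-- A set of vectors is LCD (linear complementary dual) if it meets its dual only in `0`. -/
def IsLCDSet {F : Type*} [Field F] {ι : Type*} [Fintype ι] (S : Set (ι → F)) : Prop :=
  S ∩ dualSet S = {0}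

/-- The fixed subcode `F_σ(C) = {v ∈ C : vσ = v}`. -/
def fixedCode {F : Type*} [Field F] {n : ℕ} (σ : Equiv.Perm (Fin n))
    (C : Submodule F (Fin n → F)) : Set (Fin n → F) :=
  {v | v ∈ C ∧ permAct σ v = v}

/-- The subcode `E_σ(C) = {v ∈ C : the sum of the coordinates of v over each cycle of σ is 0}`. -/
def evenCode {F : Type*} [Field F] {n : ℕ} (σ : Equiv.Perm (Fin n))
    (C : Submodule F (Fin n → F)) : Set (Fin n → F) :=
  {v | v ∈ C ∧ ∀ i : Fin n, ∑ j ∈ orbitOf σ i, v j = 0}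

/-- The setoid on coordinates whose classes are the cycles (orbits) of `σ`. -/
def cycleSetoid {n : ℕ} (σ : Equiv.Perm (Fin n)) : Setoid (Fin n) :=
  ⟨σ.SameCycle, ⟨fun x => Equiv.Perm.SameCycle.refl σ x, fun h => h.symm, fun h h' => h.trans h'⟩⟩

/-- The set of cycles of `σ` (fixed points counted as cycles of length 1); if `σ` has `s`
cycles then `Cycles σ → F` is a copy of `F^s`. -/
abbrev Cycles {n : ℕ} (σ : Equiv.Perm (Fin n)) : Type :=
  Quotient (cycleSetoid σ)

noncomputable instance {n : ℕ} (σ : Equiv.Perm (Fin n)) : Fintype (Cycles σ) :=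
  @Fintype.ofFinite _ (Quotient.finite _)

/-- The projection `π` picking one coordinate from each cycle of `σ`; on a `σ`-fixed vector
this is the common value of the vector on each cycle. -/
noncomputable def projPi {F : Type*} {n : ℕ} (σ : Equiv.Perm (Fin n)) (v : Fin n → F) :
    Cycles σ → F :=
  fun c => v c.out


lemma fixed_const {F : Type*} {n : ℕ} {σ : Equiv.Perm (Fin n)} {v : Fin n → F}
    (hv : permAct σ v = v) {i j : Fin n} (h : σ.SameCycle i j) : v i = v j := by
  have hpow : ∀ k : ℕ, ∀ x, v ((σ ^ k) x) = v x := by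
    intro k
    induction k with
    | zero => simp
    | succ k ih =>
      intro x
      have h1 : (σ ^ (k + 1)) x = (σ ^ k) (σ x) := by
        rw [pow_succ]; rfl
      rw [h1, ih (σ x)]
      exact congrFun hv x
  obtain ⟨k, _, rfl⟩ := h.exists_pow_eq'
  exact (hpow k i).symm

/-- Let `C` be a linear code over a finite field of characteristic `p` with
a permutation automorphism `σ`, all of whose cycles have length congruent to `l ≢ 0 (mod p)`.
If `C` is self-orthogonal with respect to the Euclidean inner product, then so is the projection
code `C_π = π(F_σ(C))`. -/
theorem proj_code_of_code {F : Type*} [Field F] [Fintype F] (p : ℕ) [CharP F p]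
    {n : ℕ} (σ : Equiv.Perm (Fin n)) (C : Submodule F (Fin n → F))
    (hC : ∀ v, v ∈ C ↔ permAct σ v ∈ C)
    (l : ℕ) (hl : ¬ l ≡ 0 [MOD p])
    (hcyc : ∀ i : Fin n, (orbitOf σ i).card ≡ l [MOD p])
    (h : IsSelfOrthogonalSet (C : Set (Fin n → F))) :
    IsSelfOrthogonalSet (projPi σ '' fixedCode σ C) := by
  classical
  intro x hx
  obtain ⟨u, ⟨huC, huf⟩, rfl⟩ := hx
  intro y hy
  obtain ⟨v, ⟨hvC, hvf⟩, rfl⟩ := hy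
  have h0 : eInner u v = 0 := h huC v hvC
  have hlF : (l : F) ≠ 0 := by
    intro hl0
    apply hl
    have : ((l : ℕ) : F) = ((0 : ℕ) : F) := by simpa using hl0
    exact (CharP.natCast_eq_natCast F p).1 this
  have hfiber : ∀ c : Cycles σ,
      Finset.univ.filter (fun i => (Quotient.mk (cycleSetoid σ) i : Cycles σ) = c)
        = orbitOf σ c.out := by
    intro c
    ext i
    simp only [Finset.mem_filter, Finset.mem_univ, true_and, orbitOf]
    constructor
    · intro hi
      have : (Quotient.mk (cycleSetoid σ) i : Cycles σ) = Quotient.mk (cycleSetoid σ) c.out := by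
        rw [hi, c.out_eq]
      exact (Quotient.eq.1 this).symm
    · intro hi
      have : (Quotient.mk (cycleSetoid σ) i : Cycles σ) = Quotient.mk (cycleSetoid σ) c.out :=
        Quotient.eq.2 hi.symm
      rw [this, c.out_eq]
  have key : eInner u v = (l : F) * eInner (projPi σ u) (projPi σ v) := by
    have h1 : ∑ c : Cycles σ, ∑ i ∈ Finset.univ.filter
        (fun i => (Quotient.mk (cycleSetoid σ) i : Cycles σ) = c), u i * v i
        = ∑ i, u i * v i := by
      have := Finset.sum_fiberwise_eq_sum_filter Finset.univ Finset.univ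
        (fun i => (Quotient.mk (cycleSetoid σ) i : Cycles σ)) (fun i => u i * v i)
      simpa using this
    rw [eInner, ← h1]
    rw [eInner, Finset.mul_sum]
    refine Finset.sum_congr rfl fun c _ => ?_
    rw [hfiber c]
    have hconst : ∀ i ∈ orbitOf σ c.out, u i * v i = u c.out * v c.out := by
      intro i hi
      have hsc : σ.SameCycle c.out i := by
        simpa [orbitOf] using hi
      rw [fixed_const huf hsc, fixed_const hvf hsc]
    rw [Finset.sum_congr rfl hconst, Finset.sum_const, nsmul_eq_mul]
    have hcard : (((orbitOf σ c.out).card : ℕ) : F) = (l : F) :=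
      CharP.natCast_eq_natCast' F p (hcyc c.out)
    rw [hcard]
    rfl
  rw [key] at h0
  rcases mul_eq_zero.1 h0 with h' | h'
  · exact absurd h' hlF
  · exact h'
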